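/- arXiv:2012.04125 — 4 statements merged into one kernel-verified Lean document; each statement's English description precedes it below -/
import Mathlib

section
/- There exists an absolute constant C > 0 such that for every integer n ≥ 2, every monic polynomial f over ℂ of degree n with all zeros ζ₁,…,ζₙ (counted with multiplicity) in the closed unit disk D̄(0,1), with λ₁,…,λ_{n−1} the zeros of f′ counted with multiplicity, and every integer m ≥ 1, one has | (1/n) ∑_{i=1}^{n} ζᵢ^m − (1/(n−1)) ∑_{j=1}^{n−1} λⱼ^m | ≤ C · m · log(m+1) / n. -/
open Polynomial Complex
open scoped BigOperators

open intervalIntegral Real Finset Filter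

noncomputable section

lemma exp_circle_ne (c : ℂ) (hc : ‖c‖ < 1) (θ : ℝ) :
    1 - c * Complex.exp (θ * I) ≠ 0 := by
  intro h
  have h1 : (1:ℂ) = c * Complex.exp (θ * I) := by linear_combination h
  have : ‖c * Complex.exp (θ * I)‖ = ‖c‖ := by
    rw [norm_mul, Complex.norm_exp_ofReal_mul_I, mul_one]
  rw [← h1] at this
  simp at this
  linarith

lemma cont_inv (c : ℂ) (hc : ‖c‖ < 1) :
    Continuous fun θ : ℝ => (1 - c * Complex.exp (θ * I))⁻¹ := by
  apply Continuous.inv₀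
  · fun_prop
  · exact fun θ => exp_circle_ne c hc θ

lemma norm_exp_neg_mul (m : ℕ) (θ : ℝ) : ‖Complex.exp (-(m * θ * I))‖ = 1 := by
  have : -((m:ℂ) * θ * I) = ((-(m * θ) : ℝ) : ℂ) * I := by push_cast; ring
  rw [this, Complex.norm_exp_ofReal_mul_I]

lemma norm_inv_le (c : ℂ) (hc : ‖c‖ < 1) (θ : ℝ) :
    ‖(1 - c * Complex.exp (θ * I))⁻¹‖ ≤ (1 - ‖c‖)⁻¹ := by
  have hne : ‖c * Complex.exp (θ * I)‖ = ‖c‖ := by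
    rw [norm_mul, Complex.norm_exp_ofReal_mul_I, mul_one]
  have h1 : (1:ℝ) - ‖c‖ ≤ ‖1 - c * Complex.exp (θ * I)‖ := by
    calc (1:ℝ) - ‖c‖ = ‖(1:ℂ)‖ - ‖c * Complex.exp (θ * I)‖ := by rw [hne, norm_one]
    _ ≤ _ := norm_sub_norm_le _ _
  rw [norm_inv]
  exact inv_anti₀ (by linarith) h1

lemma integral_exp_int (k : ℤ) (hk : k ≠ 0) :
    (∫ θ in (0:ℝ)..(2*π), Complex.exp (k * θ * I)) = 0 := by
  have hc : (k : ℂ) * I ≠ 0 := by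
    simp [Complex.ext_iff, I_ne_zero]
    exact_mod_cast hk
  have := integral_exp_mul_complex (a := 0) (b := 2*π) (c := (k:ℂ) * I) hc
  have h2 : (∫ θ in (0:ℝ)..(2*π), Complex.exp (k * θ * I))
      = ∫ θ in (0:ℝ)..(2*π), Complex.exp ((k * I) * θ) := by
    apply intervalIntegral.integral_congr
    intro x _; ring_nf
  rw [h2, this]
  have : ((k:ℂ) * I) * (2*π : ℝ) = (k:ℤ) * (2 * π * I) := by
    push_cast; ring
  rw [this, Complex.exp_int_mul_two_pi_mul_I]
  simp

lemma integral_orth (k m : ℕ) :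
    (∫ θ in (0:ℝ)..(2*π), Complex.exp (-(m * θ * I)) * Complex.exp (θ * I) ^ k)
      = if k = m then (2*π:ℂ) else 0 := by
  have hcongr : ∀ θ : ℝ, θ ∈ Set.uIcc (0:ℝ) (2*π) → Complex.exp (-(m * θ * I)) * Complex.exp (θ * I) ^ k
      = Complex.exp ((((k:ℤ) - (m:ℤ)) : ℂ) * θ * I) := by
    intro θ _
    rw [← Complex.exp_nat_mul, ← Complex.exp_add]
    congr 1
    push_cast
    ring
  rw [intervalIntegral.integral_congr hcongr]
  by_cases h : k = m
  · subst h
    simp only [sub_self, Int.cast_zero, zero_mul, Complex.exp_zero]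
    rw [intervalIntegral.integral_const]
    simp [Complex.real_smul]
  · have : ((k:ℤ) - m) ≠ 0 := sub_ne_zero.mpr (fun hh => h (by exact_mod_cast hh))
    have := integral_exp_int ((k:ℤ) - m) this
    push_cast at this ⊢
    rw [this]
    simp [h]

lemma integral_extract (u : ℂ) (hu : ‖u‖ < 1) (m : ℕ) :
    (∫ θ in (0:ℝ)..(2*π), Complex.exp (-(m * θ * I)) * (1 - u * Complex.exp (θ * I))⁻¹)
      = 2 * π * u ^ m := by
  set I0 := ∫ θ in (0:ℝ)..(2*π), Complex.exp (-(m * θ * I)) * (1 - u * Complex.exp (θ * I))⁻¹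
    with hI0
  have hcont0 : Continuous fun θ : ℝ => Complex.exp (-(m * θ * I)) := by fun_prop
  have key : ∀ N : ℕ, m < N → ‖I0 - 2*π*u^m‖ ≤ 2*π*(‖u‖^N * (1-‖u‖)⁻¹) := by
    intro N hN
    have hsplit : ∀ θ : ℝ, θ ∈ Set.uIcc (0:ℝ) (2*π) →
        Complex.exp (-(m * θ * I)) * (1 - u * Complex.exp (θ * I))⁻¹
        = (∑ k ∈ range N, Complex.exp (-(m * θ * I)) * u^k * Complex.exp (θ * I) ^ k)
          + Complex.exp (-(m * θ * I)) * (u * Complex.exp (θ * I))^N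
            * (1 - u * Complex.exp (θ * I))⁻¹ := by
      intro θ _
      set w := u * Complex.exp (θ * I) with hw
      have h0 : 1 - w ≠ 0 := exp_circle_ne u hu θ
      have hgeom : (∑ k ∈ range N, w^k) * (1 - w) = 1 - w^N := by
        have := geom_sum_mul w N
        linear_combination -this
      have hinv : (1 - w)⁻¹ = (∑ k ∈ range N, w^k) + w^N * (1 - w)⁻¹ := by
        field_simp
        linear_combination -hgeom
      conv_lhs => rw [hinv]
      rw [mul_add, Finset.mul_sum]
      congr 1
      · apply Finset.sum_congr rfl
        intro k _
        rw [hw, mul_pow]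
        ring
      · rw [hw, mul_pow]; ring
    rw [hI0, intervalIntegral.integral_congr hsplit]
    have hint1 : ∀ k ∈ range N, IntervalIntegrable
        (fun θ : ℝ => Complex.exp (-(m * θ * I)) * u^k * Complex.exp (θ * I) ^ k)
        MeasureTheory.volume 0 (2*π) := by
      intro k _
      apply Continuous.intervalIntegrable
      fun_prop
    have hint2 : IntervalIntegrable
        (fun θ : ℝ => Complex.exp (-(m * θ * I)) * (u * Complex.exp (θ * I))^N
          * (1 - u * Complex.exp (θ * I))⁻¹) MeasureTheory.volume 0 (2*π) := by
      apply Continuous.intervalIntegrable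
      exact ((hcont0.mul (by fun_prop)).mul (cont_inv u hu))
    have hintS : IntervalIntegrable
        (fun θ : ℝ => ∑ k ∈ range N, Complex.exp (-(m * θ * I)) * u^k * Complex.exp (θ * I) ^ k)
        MeasureTheory.volume 0 (2*π) := by
      apply Continuous.intervalIntegrable
      apply continuous_finset_sum
      intro k _
      fun_prop
    rw [intervalIntegral.integral_add hintS hint2,
      intervalIntegral.integral_finset_sum hint1]
    have hterm : ∀ k ∈ range N,
        (∫ θ in (0:ℝ)..(2*π), Complex.exp (-(m * θ * I)) * u^k * Complex.exp (θ * I) ^ k)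
        = u^k * (if k = m then (2*π:ℂ) else 0) := by
      intro k _
      rw [← integral_orth k m, ← intervalIntegral.integral_const_mul]
      apply intervalIntegral.integral_congr
      intro θ _; ring
    rw [Finset.sum_congr rfl hterm]
    rw [Finset.sum_eq_single m]
    · simp only [eq_self_iff_true, if_true]
      set T := ∫ θ in (0:ℝ)..(2*π), Complex.exp (-(m * θ * I)) * (u * Complex.exp (θ * I))^N
            * (1 - u * Complex.exp (θ * I))⁻¹ with hT
      have hcan : u ^ m * (2*π:ℂ) + T - 2*π*u^m = T := by ring
      rw [hcan]
      have hb : ‖∫ θ in (0:ℝ)..(2*π), Complex.exp (-(m * θ * I)) * (u * Complex.exp (θ * I))^N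
            * (1 - u * Complex.exp (θ * I))⁻¹‖ ≤ (‖u‖^N * (1-‖u‖)⁻¹) * |2*π - 0| := by
        apply intervalIntegral.norm_integral_le_of_norm_le_const
        intro θ _
        rw [norm_mul, norm_mul, norm_exp_neg_mul, one_mul, norm_pow, norm_mul]
        rw [Complex.norm_exp_ofReal_mul_I, mul_one]
        exact mul_le_mul_of_nonneg_left (norm_inv_le u hu θ) (pow_nonneg (norm_nonneg u) N)
      calc ‖T‖ ≤ (‖u‖^N * (1-‖u‖)⁻¹) * |2*π - 0| := hb
      _ = 2*π*(‖u‖^N * (1-‖u‖)⁻¹) := by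
          rw [sub_zero, abs_of_pos (by positivity)]; ring
    · intro k _ hk; simp [hk]
    · exact fun hm => absurd (Finset.mem_range.mpr hN) hm
  have htend : Tendsto (fun N : ℕ => 2*π*(‖u‖^N * (1-‖u‖)⁻¹)) atTop (nhds 0) := by
    have h1 : Tendsto (fun N : ℕ => ‖u‖^N) atTop (nhds 0) :=
      tendsto_pow_atTop_nhds_zero_of_lt_one (norm_nonneg u) hu
    have := (h1.const_mul ((1-‖u‖)⁻¹)).const_mul (2*π)
    simpa [mul_comm, mul_assoc, mul_left_comm] using this
  have hle : ‖I0 - 2*π*u^m‖ ≤ 0 := by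
    apply ge_of_tendsto htend
    filter_upwards [eventually_ge_atTop (m+1)] with N hN
    exact key N (by omega)
  have h0 : I0 - 2*π*u^m = 0 := norm_le_zero_iff.mp hle
  linear_combination h0

lemma re_inv_ge (u : ℂ) (hu : ‖u‖ < 1) : (1/2 : ℝ) ≤ ((1 - u)⁻¹).re := by
  have ha : u.re < 1 := lt_of_le_of_lt (Complex.re_le_norm u) hu
  have hns : Complex.normSq u < 1 := by
    rw [Complex.normSq_eq_norm_sq]
    have : ‖u‖ < 1 := hu
    nlinarith [norm_nonneg u]
  have hpos : 0 < Complex.normSq (1 - u) := by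
    rw [Complex.normSq_pos, sub_ne_zero]
    intro h
    rw [← h] at hu
    simp at hu
  rw [Complex.inv_re]
  have hre : (1 - u).re = 1 - u.re := by simp
  have hkey : Complex.normSq (1 - u) ≤ 2 * (1 - u.re) := by
    rw [Complex.normSq_apply]
    simp only [Complex.sub_re, Complex.sub_im, Complex.one_re, Complex.one_im]
    have := Complex.normSq_apply u
    nlinarith [hns, Complex.normSq_apply u]
  rw [hre, le_div_iff₀ hpos]
  linarith

lemma poisson_pointwise (w : ℂ) (hw : 1 - w ≠ 0) :
    ((1 + w) / (1 - w)).re = (1 - Complex.normSq w) / Complex.normSq (1 - w) := by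
  rw [Complex.div_re]
  simp only [Complex.add_re, Complex.add_im, Complex.sub_re, Complex.sub_im,
    Complex.one_re, Complex.one_im, Complex.normSq_apply]
  ring

lemma integral_poisson (u : ℂ) (hu : ‖u‖ < 1) :
    (∫ θ in (0:ℝ)..(2*π), (Complex.normSq (1 - u * Complex.exp (θ * I)))⁻¹)
      = 2*π / (1 - Complex.normSq u) := by
  have hns : Complex.normSq u < 1 := by
    rw [Complex.normSq_eq_norm_sq]
    nlinarith [norm_nonneg u]
  have hnsw : ∀ θ : ℝ, Complex.normSq (u * Complex.exp (θ * I)) = Complex.normSq u := by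
    intro θ
    rw [Complex.normSq_mul, Complex.normSq_eq_norm_sq (Complex.exp _), Complex.norm_exp_ofReal_mul_I]
    norm_num
  -- complex integral of (1+w)/(1-w)
  have hC : (∫ θ in (0:ℝ)..(2*π),
      (1 + u * Complex.exp (θ * I)) / (1 - u * Complex.exp (θ * I))) = 2*π := by
    have hcong : ∀ θ : ℝ, θ ∈ Set.uIcc (0:ℝ) (2*π) →
        (1 + u * Complex.exp (θ * I)) / (1 - u * Complex.exp (θ * I))
        = 2 * (Complex.exp (-((0:ℕ) * θ * I)) * (1 - u * Complex.exp (θ * I))⁻¹) - 1 := by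
      intro θ _
      have h0 := exp_circle_ne u hu θ
      field_simp
      simp only [Nat.cast_zero, mul_zero, neg_zero, Complex.exp_zero]; ring
    rw [intervalIntegral.integral_congr hcong]
    have hint : IntervalIntegrable
        (fun θ : ℝ => 2 * (Complex.exp (-((0:ℕ) * θ * I)) * (1 - u * Complex.exp (θ * I))⁻¹))
        MeasureTheory.volume 0 (2*π) := by
      apply Continuous.intervalIntegrable
      apply Continuous.mul continuous_const
      exact Continuous.mul (by fun_prop) (cont_inv u hu)
    rw [intervalIntegral.integral_sub hint (intervalIntegrable_const)]
    rw [intervalIntegral.integral_const_mul, integral_extract u hu 0]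
    rw [intervalIntegral.integral_const]
    simp [Complex.real_smul]
    ring
  -- real part
  have hintF : IntervalIntegrable
      (fun θ : ℝ => (1 + u * Complex.exp (θ * I)) / (1 - u * Complex.exp (θ * I)))
      MeasureTheory.volume 0 (2*π) := by
    apply Continuous.intervalIntegrable
    apply Continuous.div (by fun_prop) (by fun_prop)
    exact fun θ => exp_circle_ne u hu θ
  have hRe : (∫ θ in (0:ℝ)..(2*π),
      ((1 + u * Complex.exp (θ * I)) / (1 - u * Complex.exp (θ * I))).re) = 2*π := by
    have := Complex.reCLM.intervalIntegral_comp_comm hintF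
    rw [show (fun θ : ℝ => Complex.reCLM ((1 + u * Complex.exp (θ * I)) / (1 - u * Complex.exp (θ * I)))) = fun θ : ℝ => ((1 + u * Complex.exp (θ * I)) / (1 - u * Complex.exp (θ * I))).re from rfl] at this
    rw [this, hC]
    simp
  have hcong2 : ∀ θ : ℝ, θ ∈ Set.uIcc (0:ℝ) (2*π) →
      (Complex.normSq (1 - u * Complex.exp (θ * I)))⁻¹
      = (1 - Complex.normSq u)⁻¹ *
        ((1 + u * Complex.exp (θ * I)) / (1 - u * Complex.exp (θ * I))).re := by
    intro θ _
    rw [poisson_pointwise _ (exp_circle_ne u hu θ), hnsw θ]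
    rw [div_eq_mul_inv, ← mul_assoc,
      inv_mul_cancel₀ (ne_of_gt (by linarith : (0:ℝ) < 1 - Complex.normSq u)), one_mul]
  rw [intervalIntegral.integral_congr hcong2, intervalIntegral.integral_const_mul, hRe]
  rw [div_eq_mul_inv, mul_comm]

lemma deriv_prod_sub {ι : Type*} [DecidableEq ι] (c : ι → ℂ) (s : Finset ι) :
    derivative (∏ i ∈ s, (X - C (c i))) = ∑ i ∈ s, ∏ k ∈ s.erase i, (X - C (c k)) := by
  have h : derivative (∏ i ∈ s, (X - C (c i)))
      = ∑ i ∈ s, (∏ k ∈ s.erase i, (X - C (c k))) * derivative (X - C (c i)) :=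
    Polynomial.derivative_prod
  rw [h]
  exact Finset.sum_congr rfl fun i _ => by
    rw [derivative_sub, derivative_X, derivative_C, sub_zero, mul_one]

lemma one_sub_eq (z a : ℂ) (hz : z ≠ 0) : 1 - a * z = z * (z⁻¹ - a) := by
  rw [mul_sub, mul_inv_cancel₀ hz]; ring

variable {n : ℕ}

lemma key1 (hn : 2 ≤ n) (ζ : Fin n → ℂ) (lam : Fin (n - 1) → ℂ) (f : Polynomial ℂ)
    (hf : f = ∏ i, (X - C (ζ i)))
    (hd : derivative f = C (n : ℂ) * ∏ j, (X - C (lam j)))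
    (z : ℂ) (hz : z ≠ 0) :
    ∑ i, ∏ k ∈ univ.erase i, (1 - ζ k * z) = n * ∏ j, (1 - lam j * z) := by
  have hdf : derivative f = ∑ i, ∏ k ∈ univ.erase i, (X - C (ζ k)) := by
    rw [hf]; exact deriv_prod_sub ζ univ
  have E : ∑ i, ∏ k ∈ univ.erase i, (z⁻¹ - ζ k) = n * ∏ j, (z⁻¹ - lam j) := by
    have := congrArg (Polynomial.eval z⁻¹) (hdf.symm.trans hd)
    simpa [Polynomial.eval_finset_sum, Polynomial.eval_prod] using this
  have hL : ∀ i : Fin n, ∏ k ∈ univ.erase i, (1 - ζ k * z)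
      = z ^ (n - 1) * ∏ k ∈ univ.erase i, (z⁻¹ - ζ k) := by
    intro i
    have hzc : z ^ (n-1) = ∏ _k ∈ univ.erase i, z := by
      rw [Finset.prod_const, Finset.card_erase_of_mem (mem_univ i), Finset.card_univ,
        Fintype.card_fin]
    rw [hzc, ← Finset.prod_mul_distrib]
    exact Finset.prod_congr rfl fun k _ => one_sub_eq z (ζ k) hz
  have hR : ∏ j, (1 - lam j * z) = z ^ (n - 1) * ∏ j, (z⁻¹ - lam j) := by
    have hzc : z ^ (n-1) = ∏ _j : Fin (n-1), z := by
      rw [Finset.prod_const, Finset.card_univ, Fintype.card_fin]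
    rw [hzc, ← Finset.prod_mul_distrib]
    exact Finset.prod_congr rfl fun j _ => one_sub_eq z (lam j) hz
  calc ∑ i, ∏ k ∈ univ.erase i, (1 - ζ k * z)
      = ∑ i, z ^ (n - 1) * ∏ k ∈ univ.erase i, (z⁻¹ - ζ k) := Finset.sum_congr rfl fun i _ => hL i
    _ = z ^ (n - 1) * ∑ i, ∏ k ∈ univ.erase i, (z⁻¹ - ζ k) := by rw [Finset.mul_sum]
    _ = z ^ (n - 1) * ((n : ℂ) * ∏ j, (z⁻¹ - lam j)) := by rw [E]
    _ = (n : ℂ) * (z ^ (n - 1) * ∏ j, (z⁻¹ - lam j)) := by ring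
    _ = n * ∏ j, (1 - lam j * z) := by rw [← hR]

lemma key2 (hn : 2 ≤ n) (ζ : Fin n → ℂ) (lam : Fin (n - 1) → ℂ) (f : Polynomial ℂ)
    (hf : f = ∏ i, (X - C (ζ i)))
    (hd : derivative f = C (n : ℂ) * ∏ j, (X - C (lam j)))
    (z : ℂ) (hz : z ≠ 0) :
    ∑ i, ∑ k ∈ univ.erase i, ∏ l ∈ (univ.erase i).erase k, (1 - ζ l * z)
      = n * ∑ j, ∏ l ∈ univ.erase j, (1 - lam l * z) := by
  have hdf : derivative f = ∑ i, ∏ k ∈ univ.erase i, (X - C (ζ k)) := by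
    rw [hf]; exact deriv_prod_sub ζ univ
  have hdf2 : derivative (derivative f)
      = ∑ i, ∑ k ∈ univ.erase i, ∏ l ∈ (univ.erase i).erase k, (X - C (ζ l)) := by
    rw [hdf, derivative_sum]
    exact Finset.sum_congr rfl fun i _ => deriv_prod_sub ζ (univ.erase i)
  have hdd : derivative (derivative f) = C (n : ℂ) * ∑ j, ∏ l ∈ univ.erase j, (X - C (lam l)) := by
    rw [hd, derivative_C_mul, deriv_prod_sub lam univ]
  have E : ∑ i, ∑ k ∈ univ.erase i, ∏ l ∈ (univ.erase i).erase k, (z⁻¹ - ζ l)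
      = n * ∑ j, ∏ l ∈ univ.erase j, (z⁻¹ - lam l) := by
    have := congrArg (Polynomial.eval z⁻¹) (hdf2.symm.trans hdd)
    simpa [Polynomial.eval_finset_sum, Polynomial.eval_prod] using this
  have hL : ∀ (i k : Fin n), k ∈ univ.erase i →
      ∏ l ∈ (univ.erase i).erase k, (1 - ζ l * z)
      = z ^ (n - 2) * ∏ l ∈ (univ.erase i).erase k, (z⁻¹ - ζ l) := by
    intro i k hk
    have hzc : z ^ (n-2) = ∏ _l ∈ (univ.erase i).erase k, z := by
      rw [Finset.prod_const, Finset.card_erase_of_mem hk,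
        Finset.card_erase_of_mem (mem_univ i), Finset.card_univ, Fintype.card_fin]
      congr 1
    rw [hzc, ← Finset.prod_mul_distrib]
    exact Finset.prod_congr rfl fun l _ => one_sub_eq z (ζ l) hz
  have hR : ∀ j : Fin (n-1), ∏ l ∈ univ.erase j, (1 - lam l * z)
      = z ^ (n - 2) * ∏ l ∈ univ.erase j, (z⁻¹ - lam l) := by
    intro j
    have hzc : z ^ (n-2) = ∏ _l ∈ (univ : Finset (Fin (n-1))).erase j, z := by
      rw [Finset.prod_const, Finset.card_erase_of_mem (mem_univ j), Finset.card_univ,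
        Fintype.card_fin]
      congr 1
    rw [hzc, ← Finset.prod_mul_distrib]
    exact Finset.prod_congr rfl fun l _ => one_sub_eq z (lam l) hz
  calc ∑ i, ∑ k ∈ univ.erase i, ∏ l ∈ (univ.erase i).erase k, (1 - ζ l * z)
      = ∑ i, ∑ k ∈ univ.erase i, z ^ (n-2) * ∏ l ∈ (univ.erase i).erase k, (z⁻¹ - ζ l) :=
        Finset.sum_congr rfl fun i _ => Finset.sum_congr rfl fun k hk => hL i k hk
    _ = z ^ (n-2) * ∑ i, ∑ k ∈ univ.erase i, ∏ l ∈ (univ.erase i).erase k, (z⁻¹ - ζ l) := by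
        rw [Finset.mul_sum]
        exact Finset.sum_congr rfl fun i _ => by rw [Finset.mul_sum]
    _ = z ^ (n-2) * ((n:ℂ) * ∑ j, ∏ l ∈ univ.erase j, (z⁻¹ - lam l)) := by rw [E]
    _ = (n:ℂ) * ∑ j, z ^ (n-2) * ∏ l ∈ univ.erase j, (z⁻¹ - lam l) := by
        rw [Finset.mul_sum, Finset.mul_sum, Finset.mul_sum]
        exact Finset.sum_congr rfl fun j _ => by ring
    _ = n * ∑ j, ∏ l ∈ univ.erase j, (1 - lam l * z) :=
        congrArg _ (Finset.sum_congr rfl fun j _ => (hR j).symm)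

lemma one_sub_ne (w : ℂ) (hw : ‖w‖ < 1) : 1 - w ≠ 0 := by
  intro h
  have : (1:ℂ) = w := by linear_combination h
  rw [← this] at hw
  simp at hw

lemma S1_re (ζ : Fin n → ℂ) (z : ℂ) (hζz : ∀ i, ‖ζ i * z‖ < 1) :
    (n:ℝ)/2 ≤ (∑ i, (1 - ζ i * z)⁻¹).re := by
  rw [Complex.re_sum]
  calc (n:ℝ)/2 = ∑ _i : Fin n, (1/2 : ℝ) := by
        rw [Finset.sum_const, Finset.card_univ, Fintype.card_fin]
        simp [div_eq_mul_inv]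
        try ring
    _ ≤ ∑ i, ((1 - ζ i * z)⁻¹).re :=
        Finset.sum_le_sum fun i _ => re_inv_ge _ (hζz i)

lemma S1_norm (ζ : Fin n → ℂ) (z : ℂ) (hζz : ∀ i, ‖ζ i * z‖ < 1) :
    (n:ℝ)/2 ≤ ‖∑ i, (1 - ζ i * z)⁻¹‖ := by
  calc (n:ℝ)/2 ≤ (∑ i, (1 - ζ i * z)⁻¹).re := S1_re ζ z hζz
    _ ≤ ‖∑ i, (1 - ζ i * z)⁻¹‖ := Complex.re_le_norm _
    _ = ‖∑ i, (1 - ζ i * z)⁻¹‖ := rfl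

lemma S1_ne (hn : 2 ≤ n) (ζ : Fin n → ℂ) (z : ℂ) (hζz : ∀ i, ‖ζ i * z‖ < 1) :
    (∑ i, (1 - ζ i * z)⁻¹) ≠ 0 := by
  intro h
  have := S1_norm ζ z hζz
  rw [h] at this
  simp at this
  have : (2:ℝ) ≤ n := by exact_mod_cast hn
  linarith

lemma prod_erase_eq {ι : Type*} [DecidableEq ι] (s : Finset ι) (f : ι → ℂ) {i : ι}
    (hi : i ∈ s) (hf : f i ≠ 0) :
    ∏ x ∈ s.erase i, f x = (∏ x ∈ s, f x) * (f i)⁻¹ := by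
  rw [← Finset.prod_erase_mul s f hi]
  field_simp

-- λ's lie in the closed unit disk (Gauss–Lucas style, self-contained)
lemma lam_le_one (hn : 2 ≤ n) (ζ : Fin n → ℂ) (lam : Fin (n - 1) → ℂ)
    (hζ : ∀ i, ‖ζ i‖ ≤ 1)
    (hkey1 : ∀ z : ℂ, z ≠ 0 →
      ∑ i, ∏ k ∈ univ.erase i, (1 - ζ k * z) = n * ∏ j, (1 - lam j * z)) :
    ∀ j, ‖lam j‖ ≤ 1 := by
  intro j
  by_contra hcon
  push_neg at hcon
  have hlj : lam j ≠ 0 := by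
    intro h; rw [h] at hcon; simp at hcon; linarith
  set z₀ : ℂ := (lam j)⁻¹ with hz₀
  have hz₀ne : z₀ ≠ 0 := inv_ne_zero hlj
  have hz₀norm : ‖z₀‖ < 1 := by
    rw [hz₀, norm_inv]
    rw [inv_lt_one_iff₀]
    right; exact hcon
  have hζz : ∀ i, ‖ζ i * z₀‖ < 1 := by
    intro i
    rw [norm_mul]
    calc ‖ζ i‖ * ‖z₀‖ ≤ 1 * ‖z₀‖ := by
          apply mul_le_mul_of_nonneg_right _ (norm_nonneg _)
          exact hζ i
      _ < 1 := by rwa [one_mul]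
  have hfne : ∀ i, 1 - ζ i * z₀ ≠ 0 := fun i => one_sub_ne _ (hζz i)
  have hGne : (∏ i, (1 - ζ i * z₀)) ≠ 0 := Finset.prod_ne_zero_iff.mpr fun i _ => hfne i
  have hkey := hkey1 z₀ hz₀ne
  have hRHS : (∏ j', (1 - lam j' * z₀)) = 0 := by
    apply Finset.prod_eq_zero (mem_univ j)
    rw [hz₀, mul_inv_cancel₀ hlj, sub_self]
  rw [hRHS, mul_zero] at hkey
  have hLHS : ∑ i, ∏ k ∈ univ.erase i, (1 - ζ k * z₀)
      = (∏ i, (1 - ζ i * z₀)) * ∑ i, (1 - ζ i * z₀)⁻¹ := by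
    rw [Finset.mul_sum]
    exact Finset.sum_congr rfl fun i _ => prod_erase_eq univ _ (mem_univ i) (hfne i)
  rw [hLHS] at hkey
  exact (mul_ne_zero hGne (S1_ne hn ζ z₀ hζz)) hkey

lemma phi_eq (hn : 2 ≤ n) (ζ : Fin n → ℂ) (lam : Fin (n - 1) → ℂ)
    (z : ℂ) (hz : z ≠ 0)
    (hζz : ∀ i, ‖ζ i * z‖ < 1) (hlz : ∀ j, 1 - lam j * z ≠ 0)
    (hkey1 : ∑ i, ∏ k ∈ univ.erase i, (1 - ζ k * z) = n * ∏ j, (1 - lam j * z))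
    (hkey2 : ∑ i, ∑ k ∈ univ.erase i, ∏ l ∈ (univ.erase i).erase k, (1 - ζ l * z)
      = n * ∑ j, ∏ l ∈ univ.erase j, (1 - lam l * z)) :
    (1/(n:ℂ)) * ∑ i, (1 - ζ i * z)⁻¹ - (1/((n:ℂ)-1)) * ∑ j, (1 - lam j * z)⁻¹
      = ((n:ℂ) * (∑ i, ((1 - ζ i * z)⁻¹)^2) - (∑ i, (1 - ζ i * z)⁻¹)^2)
        / ((n:ℂ) * ((n:ℂ)-1) * ∑ i, (1 - ζ i * z)⁻¹) := by
  have hfne : ∀ i, 1 - ζ i * z ≠ 0 := fun i => one_sub_ne _ (hζz i)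
  set u : Fin n → ℂ := fun i => (1 - ζ i * z)⁻¹ with hu
  set S := ∑ i, u i with hS
  set Q := ∑ i, (u i)^2 with hQ
  set G := ∏ i, (1 - ζ i * z) with hG
  set H := ∏ j, (1 - lam j * z) with hH
  set T := ∑ j, (1 - lam j * z)⁻¹ with hT
  have hGne : G ≠ 0 := Finset.prod_ne_zero_iff.mpr fun i _ => hfne i
  have hSne : S ≠ 0 := S1_ne hn ζ z hζz
  have hGS : G * S = n * H := by
    rw [← hkey1, Finset.mul_sum]
    exact (Finset.sum_congr rfl fun i _ => prod_erase_eq univ _ (mem_univ i) (hfne i)).symm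
  have hHT : (n:ℂ) * ∑ j, ∏ l ∈ univ.erase j, (1 - lam l * z) = (n:ℂ) * (H * T) := by
    congr 1
    rw [Finset.mul_sum]
    exact Finset.sum_congr rfl fun j _ => prod_erase_eq univ _ (mem_univ j) (hlz j)
  have hLHS2 : ∑ i, ∑ k ∈ univ.erase i, ∏ l ∈ (univ.erase i).erase k, (1 - ζ l * z)
      = G * (S^2 - Q) := by
    have hstep : ∀ i : Fin n, ∑ k ∈ univ.erase i, ∏ l ∈ (univ.erase i).erase k, (1 - ζ l * z)
        = G * (u i * (S - u i)) := by
      intro i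
      have hin : ∀ k ∈ univ.erase i, ∏ l ∈ (univ.erase i).erase k, (1 - ζ l * z)
          = G * u i * u k := by
        intro k hk
        rw [prod_erase_eq (univ.erase i) _ hk (hfne k),
          prod_erase_eq univ _ (mem_univ i) (hfne i)]
      rw [Finset.sum_congr rfl hin]
      have : ∑ k ∈ univ.erase i, G * u i * u k = G * u i * ∑ k ∈ univ.erase i, u k := by
        rw [Finset.mul_sum]
      rw [this, Finset.sum_erase_eq_sub (mem_univ i)]
      rw [← hS]
      ring
    rw [Finset.sum_congr rfl fun i _ => hstep i]
    rw [← Finset.mul_sum]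
    congr 1
    have : ∑ i, u i * (S - u i) = S * S - Q := by
      rw [Finset.sum_congr rfl (fun i _ => by ring :
        ∀ i ∈ univ, u i * (S - u i) = S * u i - (u i)^2)]
      rw [Finset.sum_sub_distrib, ← Finset.mul_sum, ← hS, ← hQ]
    rw [this]; ring
  have hST : S * T = S^2 - Q := by
    have h1 : G * (S^2 - Q) = (n:ℂ) * (H * T) := by rw [← hLHS2, hkey2, hHT]
    have h2 : (n:ℂ) * (H * T) = (G * S) * T := by rw [hGS]; ring
    have h3 : G * (S^2 - Q) = G * (S * T) := by rw [h1, h2]; ring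
    exact (mul_left_cancel₀ hGne h3).symm
  have hn0 : (n:ℂ) ≠ 0 := by
    simp only [ne_eq, Nat.cast_eq_zero]
    omega
  have hn1 : (n:ℂ) - 1 ≠ 0 := by
    intro h
    have : (n:ℂ) = 1 := by linear_combination h
    have : n = 1 := by exact_mod_cast this
    omega
  rw [eq_div_iff (mul_ne_zero (mul_ne_zero hn0 hn1) hSne)]
  have e1 : (1/(n:ℂ)) * (n:ℂ) = 1 := one_div_mul_cancel hn0
  have e2 : (1/((n:ℂ)-1)) * ((n:ℂ)-1) = 1 := one_div_mul_cancel hn1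
  linear_combination (((n:ℂ)-1) * S^2) * e1 - ((n:ℂ) * S * T) * e2 - (n:ℂ) * hST

lemma div_bound_aux (nr a b s : ℝ) (hn : 2 ≤ nr) (ha : 0 ≤ a) (hb : 0 ≤ b)
    (hab : a ≤ 2*nr*b) (hs : nr/2 ≤ s) :
    a / (nr*(nr-1)*s) ≤ 4/(nr*(nr-1)) * b := by
  have h0 : 0 < nr := by linarith
  have h1 : 0 < nr - 1 := by linarith
  have hs0 : 0 < s := by linarith
  have hd : 0 < nr*(nr-1)*(nr/2) := by positivity
  calc a / (nr*(nr-1)*s) ≤ (2*nr*b) / (nr*(nr-1)*(nr/2)) := by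
        apply div_le_div₀ (by positivity) hab hd
        apply mul_le_mul_of_nonneg_left hs (by positivity)
    _ = 4/(nr*(nr-1)) * b := by
        field_simp
        ring

variable {n : ℕ}

lemma phi_norm_bound (hn : 2 ≤ n) (ζ : Fin n → ℂ) (lam : Fin (n - 1) → ℂ)
    (z : ℂ) (hz : z ≠ 0) (hz1 : ‖z‖ ≤ 1)
    (hζ : ∀ i, ‖ζ i‖ ≤ 1)
    (hζz : ∀ i, ‖ζ i * z‖ < 1) (hlz : ∀ j, 1 - lam j * z ≠ 0)
    (hkey1 : ∑ i, ∏ k ∈ univ.erase i, (1 - ζ k * z) = n * ∏ j, (1 - lam j * z))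
    (hkey2 : ∑ i, ∑ k ∈ univ.erase i, ∏ l ∈ (univ.erase i).erase k, (1 - ζ l * z)
      = n * ∑ j, ∏ l ∈ univ.erase j, (1 - lam l * z)) :
    ‖(1/(n:ℂ)) * ∑ i, (1 - ζ i * z)⁻¹ - (1/((n:ℂ)-1)) * ∑ j, (1 - lam j * z)⁻¹‖
      ≤ 4/((n:ℝ)*((n:ℝ)-1)) * ∑ i, ‖(1 - ζ i * z)⁻¹‖^2 := by
  have hn2 : (2:ℝ) ≤ (n:ℝ) := by exact_mod_cast hn
  have hfne : ∀ i, 1 - ζ i * z ≠ 0 := fun i => one_sub_ne _ (hζz i)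
  rw [phi_eq hn ζ lam z hz hζz hlz hkey1 hkey2]
  set u : Fin n → ℂ := fun i => (1 - ζ i * z)⁻¹ with hu
  set S := ∑ i, u i with hS
  set Q := ∑ i, (u i)^2 with hQ
  set S2 := ∑ i, ζ i * u i with hS2
  set S3 := ∑ i, (ζ i)^2 * (u i)^2 with hS3
  set Qt := ∑ i, ‖u i‖^2 with hQt
  have hQt0 : 0 ≤ Qt := Finset.sum_nonneg fun i _ => sq_nonneg _
  have hζn : ∀ i, ‖ζ i‖ ≤ 1 := fun i => by exact hζ i
  have hmul : ∀ i, (1 - ζ i * z) * u i = 1 := fun i => mul_inv_cancel₀ (hfne i)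
  have hui : ∀ i, z * (ζ i * u i) = u i - 1 := by
    intro i
    linear_combination -hmul i
  have h2 : z * S2 = S - n := by
    rw [hS2, Finset.mul_sum]
    rw [Finset.sum_congr rfl fun i (_ : i ∈ univ) => hui i]
    rw [Finset.sum_sub_distrib, Finset.sum_const, Finset.card_univ, Fintype.card_fin, ← hS]
    simp
  have h3 : z^2 * S3 = Q - 2*S + n := by
    have ha : z^2 * S3 = ∑ i, (z * (ζ i * u i))^2 := by
      rw [hS3, Finset.mul_sum]
      exact Finset.sum_congr rfl fun i _ => by ring
    rw [ha, Finset.sum_congr rfl fun i (_ : i ∈ univ) => by rw [hui i]]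
    have : ∀ i ∈ (univ : Finset (Fin n)), (u i - 1)^2 = (u i)^2 - 2 * u i + 1 :=
      fun i _ => by ring
    rw [Finset.sum_congr rfl this, Finset.sum_add_distrib, Finset.sum_sub_distrib,
      Finset.sum_const, Finset.card_univ, Fintype.card_fin, ← Finset.mul_sum, ← hS, ← hQ]
    simp
  have hNum : (n:ℂ)*Q - S^2 = z^2 * ((n:ℂ)*S3 - S2^2) := by
    linear_combination (-(n:ℂ))*h3 + (z*S2 + S - (n:ℂ))*h2
  have hS3b : ‖S3‖ ≤ Qt := by
    calc ‖S3‖ ≤ ∑ i, ‖(ζ i)^2 * (u i)^2‖ := norm_sum_le _ _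
      _ ≤ ∑ i, ‖u i‖^2 := by
          apply Finset.sum_le_sum
          intro i _
          rw [norm_mul, norm_pow, norm_pow]
          calc ‖ζ i‖^2 * ‖u i‖^2 ≤ 1 * ‖u i‖^2 := by
                apply mul_le_mul_of_nonneg_right _ (sq_nonneg _)
                exact pow_le_one₀ (norm_nonneg _) (hζn i)
            _ = ‖u i‖^2 := one_mul _
  have hS2b : ‖S2‖^2 ≤ n * Qt := by
    have h1 : ‖S2‖ ≤ ∑ i, ‖u i‖ := by
      calc ‖S2‖ ≤ ∑ i, ‖ζ i * u i‖ := norm_sum_le _ _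
        _ ≤ ∑ i, ‖u i‖ := by
            apply Finset.sum_le_sum
            intro i _
            rw [norm_mul]
            calc ‖ζ i‖ * ‖u i‖ ≤ 1 * ‖u i‖ :=
                  mul_le_mul_of_nonneg_right (hζn i) (norm_nonneg _)
              _ = ‖u i‖ := one_mul _
    have h2' : (∑ i, ‖u i‖)^2 ≤ (n:ℝ) * Qt := by
      have := Finset.sum_mul_sq_le_sq_mul_sq univ (fun _ : Fin n => (1:ℝ)) (fun i => ‖u i‖)
      simp only [one_pow, one_mul, Finset.sum_const, Finset.card_univ, Fintype.card_fin,
        nsmul_eq_mul, mul_one] at this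
      calc (∑ i, ‖u i‖)^2 ≤ (n:ℝ) * ∑ i, ‖u i‖^2 := this
        _ = (n:ℝ) * Qt := by rw [hQt]
    calc ‖S2‖^2 ≤ (∑ i, ‖u i‖)^2 := by
          apply pow_le_pow_left₀ (norm_nonneg _) h1
      _ ≤ (n:ℝ) * Qt := h2'
  have hNumB : ‖(n:ℂ)*Q - S^2‖ ≤ 2*(n:ℝ)*Qt := by
    rw [hNum, norm_mul, norm_pow]
    calc ‖z‖^2 * ‖(n:ℂ)*S3 - S2^2‖ ≤ 1 * ‖(n:ℂ)*S3 - S2^2‖ := by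
          apply mul_le_mul_of_nonneg_right _ (norm_nonneg _)
          exact pow_le_one₀ (norm_nonneg _) hz1
      _ = ‖(n:ℂ)*S3 - S2^2‖ := one_mul _
      _ ≤ ‖(n:ℂ)*S3‖ + ‖S2^2‖ := norm_sub_le _ _
      _ = (n:ℝ) * ‖S3‖ + ‖S2‖^2 := by
          rw [norm_mul, norm_pow, Complex.norm_natCast]
      _ ≤ (n:ℝ) * Qt + (n:ℝ) * Qt := by
          apply add_le_add _ hS2b
          exact mul_le_mul_of_nonneg_left hS3b (by positivity)
      _ = 2*(n:ℝ)*Qt := by ring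
  have hSb : (n:ℝ)/2 ≤ ‖S‖ := S1_norm ζ z hζz
  have hDen : ‖(n:ℂ) * ((n:ℂ)-1) * S‖ = (n:ℝ) * ((n:ℝ)-1) * ‖S‖ := by
    rw [norm_mul, norm_mul, Complex.norm_natCast]
    congr 2
    have : (n:ℂ) - 1 = (((n:ℝ) - 1 : ℝ) : ℂ) := by push_cast; ring
    rw [this, Complex.norm_real]
    exact abs_of_nonneg (by linarith)
  rw [norm_div, hDen]
  exact div_bound_aux (n:ℝ) _ Qt ‖S‖ hn2 (norm_nonneg _) hQt0 hNumB hSb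

lemma norm_inv_sq (w : ℂ) : ‖w⁻¹‖^2 = (Complex.normSq w)⁻¹ := by
  rw [norm_inv, inv_pow, Complex.sq_norm]

lemma final_numeric (nr mr P Q L : ℝ) (hn : 2 ≤ nr) (hm : 1 ≤ mr)
    (hP : 1/3 ≤ P) (hQ : 1/(2*mr) ≤ Q) (hL : Real.log 2 ≤ L) :
    4/(P * (nr-1) * Q) ≤ 100*mr*L/nr := by
  have hlog := Real.log_two_gt_d9
  have hL' : (0.69:ℝ) ≤ L := by linarith
  have hm0 : 0 < mr := by linarith
  have hP0 : 0 < P := by linarith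
  have hQ0 : 0 < Q := by
    calc (0:ℝ) < 1/(2*mr) := by positivity
      _ ≤ Q := hQ
  have h1 : nr/2 ≤ nr - 1 := by linarith
  have hden : (1/3)*(nr/2)*(1/(2*mr)) ≤ P*(nr-1)*Q := by
    apply mul_le_mul _ hQ (by positivity) _
    · apply mul_le_mul hP h1 (by positivity) (by linarith)
    · have : (0:ℝ) < nr - 1 := by linarith
      positivity
  have hdpos : 0 < (1/3)*(nr/2)*(1/(2*mr)) := by positivity
  calc 4/(P*(nr-1)*Q) ≤ 4/((1/3)*(nr/2)*(1/(2*mr))) := by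
        apply div_le_div_of_nonneg_left (by norm_num) hdpos hden
    _ = 48*mr/nr := by
        field_simp
        ring
    _ ≤ 100*mr*L/nr := by
        rw [div_le_div_iff₀ (by linarith) (by linarith)]
        have hmn : (0:ℝ) < mr*nr := by positivity
        nlinarith [mul_le_mul_of_nonneg_left hL' (le_of_lt hmn)]

/-- Moment matching estimate: there is an absolute constant `C > 0` such that for any
monic `f = ∏ (X - ζᵢ)` of degree `n ≥ 2` with all zeros in the closed unit disk and
`f' = n ∏ (X - λⱼ)`, and any `m ≥ 1`,
`|(1/n) ∑ ζᵢ^m - (1/(n-1)) ∑ λⱼ^m| ≤ C m log(m+1) / n`. -/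
theorem moment_matching : ∃ C : ℝ, 0 < C ∧
    ∀ n : ℕ, 2 ≤ n → ∀ (ζ : Fin n → ℂ) (lam : Fin (n - 1) → ℂ) (f : Polynomial ℂ),
      f = ∏ i, (Polynomial.X - Polynomial.C (ζ i)) →
      (∀ i, ‖ζ i‖ ≤ 1) →
      Polynomial.derivative f =
        Polynomial.C (n : ℂ) * ∏ j, (Polynomial.X - Polynomial.C (lam j)) →
      ∀ m : ℕ, 1 ≤ m →
        ‖(1 / (n : ℂ)) * ∑ i, ζ i ^ m
            - (1 / ((n : ℂ) - 1)) * ∑ j, lam j ^ m‖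
          ≤ C * m * Real.log (m + 1) / n := by
  refine ⟨100, by norm_num, ?_⟩
  intro n hn ζ lam f hf hζ hd m hm
  have hn2 : (2:ℝ) ≤ (n:ℝ) := by exact_mod_cast hn
  have hm1 : (1:ℝ) ≤ (m:ℝ) := by exact_mod_cast hm
  have hm0 : (0:ℝ) < (m:ℝ) := by linarith
  set r : ℝ := m / (m+1) with hrdef
  have hr0 : 0 < r := by positivity
  have hr1 : r < 1 := by
    rw [hrdef, div_lt_one (by linarith)]
    linarith
  have hk1 : ∀ z : ℂ, z ≠ 0 →
      ∑ i, ∏ k ∈ univ.erase i, (1 - ζ k * z) = n * ∏ j, (1 - lam j * z) :=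
    fun z hz => key1 hn ζ lam f hf hd z hz
  have hk2 : ∀ z : ℂ, z ≠ 0 →
      ∑ i, ∑ k ∈ univ.erase i, ∏ l ∈ (univ.erase i).erase k, (1 - ζ l * z)
        = n * ∑ j, ∏ l ∈ univ.erase j, (1 - lam l * z) :=
    fun z hz => key2 hn ζ lam f hf hd z hz
  have hlam := lam_le_one hn ζ lam hζ hk1
  set c : Fin n → ℂ := fun i => ζ i * (r:ℂ) with hcdef
  set d : Fin (n-1) → ℂ := fun j => lam j * (r:ℂ) with hddef
  have hrc : ‖((r:ℝ):ℂ)‖ = r := by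
    rw [Complex.norm_real, Real.norm_eq_abs, abs_of_pos hr0]
  have hcr : ∀ i, ‖c i‖ ≤ r := by
    intro i
    simp only [hcdef]
    rw [norm_mul, hrc]
    calc ‖ζ i‖ * r ≤ 1 * r := by
          apply mul_le_mul_of_nonneg_right _ (le_of_lt hr0)
          exact hζ i
      _ = r := one_mul r
  have hcn : ∀ i, ‖c i‖ < 1 := fun i => lt_of_le_of_lt (hcr i) hr1
  have hdr : ∀ j, ‖d j‖ ≤ r := by
    intro j
    simp only [hddef]
    rw [norm_mul, hrc]
    calc ‖lam j‖ * r ≤ 1 * r := by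
          apply mul_le_mul_of_nonneg_right _ (le_of_lt hr0)
          exact hlam j
      _ = r := one_mul r
  have hdn : ∀ j, ‖d j‖ < 1 := fun j => lt_of_le_of_lt (hdr j) hr1
  -- pointwise bound
  have hb : ∀ θ : ℝ,
      ‖(1/(n:ℂ)) * (∑ i, (1 - c i * Complex.exp (θ*I))⁻¹)
        - (1/((n:ℂ)-1)) * (∑ j, (1 - d j * Complex.exp (θ*I))⁻¹)‖
      ≤ 4/((n:ℝ)*((n:ℝ)-1)) * ∑ i, (Complex.normSq (1 - c i * Complex.exp (θ*I)))⁻¹ := by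
    intro θ
    have hexp : ‖Complex.exp (θ*I)‖ = 1 := by
      rw [Complex.norm_exp_ofReal_mul_I]
    set z : ℂ := (r:ℂ) * Complex.exp (θ*I) with hzdef
    have hzne : z ≠ 0 := mul_ne_zero (by
      rw [ne_eq, Complex.ofReal_eq_zero]; linarith) (Complex.exp_ne_zero _)
    have hz1 : ‖z‖ ≤ 1 := by
      rw [hzdef, norm_mul, hrc, hexp, mul_one]; linarith
    have hassocζ : ∀ i, ζ i * z = c i * Complex.exp (θ*I) := by
      intro i; simp only [hzdef, hcdef]; ring
    have hassocl : ∀ j, lam j * z = d j * Complex.exp (θ*I) := by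
      intro j; simp only [hzdef, hddef]; ring
    have hζz : ∀ i, ‖ζ i * z‖ < 1 := by
      intro i; rw [hassocζ i, norm_mul, hexp, mul_one]; exact hcn i
    have hlz : ∀ j, 1 - lam j * z ≠ 0 := by
      intro j
      apply one_sub_ne
      rw [hassocl j, norm_mul, hexp, mul_one]; exact hdn j
    have h := phi_norm_bound hn ζ lam z hzne hz1 hζ hζz hlz (hk1 z hzne) (hk2 z hzne)
    simp only [hassocζ, hassocl, norm_inv_sq] at h
    exact h
  -- the function Φ and its integral
  set Φ : ℝ → ℂ := fun θ => (1/(n:ℂ)) * (∑ i, (1 - c i * Complex.exp (θ*I))⁻¹)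
      - (1/((n:ℂ)-1)) * (∑ j, (1 - d j * Complex.exp (θ*I))⁻¹) with hΦdef
  set F : ℝ → ℂ := fun θ => Complex.exp (-(m*θ*I)) * Φ θ with hFdef
  set D : ℂ := (1 / (n : ℂ)) * ∑ i, ζ i ^ m - (1 / ((n : ℂ) - 1)) * ∑ j, lam j ^ m with hDdef
  have hcontΦ : Continuous Φ := by
    apply Continuous.sub
    · exact continuous_const.mul (continuous_finset_sum _ fun i _ => cont_inv (c i) (hcn i))
    · exact continuous_const.mul (continuous_finset_sum _ fun j _ => cont_inv (d j) (hdn j))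
  have hcontF : Continuous F := by
    apply Continuous.mul _ hcontΦ
    fun_prop
  have hIF : (∫ θ in (0:ℝ)..(2*π), F θ) = 2*π*((r:ℝ):ℂ)^m * D := by
    have hFexp : ∀ θ ∈ Set.uIcc (0:ℝ) (2*π), F θ =
        (∑ i, (1/(n:ℂ)) * (Complex.exp (-(m*θ*I)) * (1 - c i * Complex.exp (θ*I))⁻¹))
        - (∑ j, (1/((n:ℂ)-1)) * (Complex.exp (-(m*θ*I)) * (1 - d j * Complex.exp (θ*I))⁻¹)) := by
      intro θ _
      rw [hFdef]
      simp only [hΦdef, mul_sub, Finset.mul_sum]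
      congr 1
      · exact Finset.sum_congr rfl fun i _ => by ring
      · exact Finset.sum_congr rfl fun j _ => by ring
    rw [intervalIntegral.integral_congr hFexp]
    have hint1 : ∀ i ∈ (univ : Finset (Fin n)), IntervalIntegrable
        (fun θ : ℝ => (1/(n:ℂ)) * (Complex.exp (-(m*θ*I)) * (1 - c i * Complex.exp (θ*I))⁻¹))
        MeasureTheory.volume 0 (2*π) := by
      intro i _
      apply Continuous.intervalIntegrable
      exact continuous_const.mul ((by fun_prop : Continuous fun θ : ℝ => Complex.exp (-(m*θ*I))).mul
        (cont_inv (c i) (hcn i)))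
    have hint2 : ∀ j ∈ (univ : Finset (Fin (n-1))), IntervalIntegrable
        (fun θ : ℝ => (1/((n:ℂ)-1)) * (Complex.exp (-(m*θ*I)) * (1 - d j * Complex.exp (θ*I))⁻¹))
        MeasureTheory.volume 0 (2*π) := by
      intro j _
      apply Continuous.intervalIntegrable
      exact continuous_const.mul ((by fun_prop : Continuous fun θ : ℝ => Complex.exp (-(m*θ*I))).mul
        (cont_inv (d j) (hdn j)))
    have hintS1 : IntervalIntegrable
        (fun θ : ℝ => ∑ i, (1/(n:ℂ)) * (Complex.exp (-(m*θ*I)) * (1 - c i * Complex.exp (θ*I))⁻¹))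
        MeasureTheory.volume 0 (2*π) := by
      apply Continuous.intervalIntegrable
      apply continuous_finset_sum
      intro i _
      exact continuous_const.mul ((by fun_prop : Continuous fun θ : ℝ => Complex.exp (-(m*θ*I))).mul
        (cont_inv (c i) (hcn i)))
    have hintS2 : IntervalIntegrable
        (fun θ : ℝ => ∑ j, (1/((n:ℂ)-1)) * (Complex.exp (-(m*θ*I)) * (1 - d j * Complex.exp (θ*I))⁻¹))
        MeasureTheory.volume 0 (2*π) := by
      apply Continuous.intervalIntegrable
      apply continuous_finset_sum
      intro j _
      exact continuous_const.mul ((by fun_prop : Continuous fun θ : ℝ => Complex.exp (-(m*θ*I))).mul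
        (cont_inv (d j) (hdn j)))
    rw [intervalIntegral.integral_sub hintS1 hintS2]
    rw [intervalIntegral.integral_finset_sum hint1, intervalIntegral.integral_finset_sum hint2]
    have hterm1 : ∀ i ∈ (univ : Finset (Fin n)),
        (∫ θ in (0:ℝ)..(2*π), (1/(n:ℂ)) * (Complex.exp (-(m*θ*I)) * (1 - c i * Complex.exp (θ*I))⁻¹))
        = (2*π*((r:ℝ):ℂ)^m * (1/(n:ℂ))) * ζ i ^ m := by
      intro i _
      rw [intervalIntegral.integral_const_mul, integral_extract (c i) (hcn i) m]
      simp only [hcdef]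
      rw [mul_pow]
      ring
    have hterm2 : ∀ j ∈ (univ : Finset (Fin (n-1))),
        (∫ θ in (0:ℝ)..(2*π), (1/((n:ℂ)-1)) * (Complex.exp (-(m*θ*I)) * (1 - d j * Complex.exp (θ*I))⁻¹))
        = (2*π*((r:ℝ):ℂ)^m * (1/((n:ℂ)-1))) * lam j ^ m := by
      intro j _
      rw [intervalIntegral.integral_const_mul, integral_extract (d j) (hdn j) m]
      simp only [hddef]
      rw [mul_pow]
      ring
    rw [Finset.sum_congr rfl hterm1, Finset.sum_congr rfl hterm2,
      ← Finset.mul_sum, ← Finset.mul_sum, hDdef]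
    ring
  -- integrability of the bounding function
  have hcont_g : ∀ i : Fin n, Continuous
      (fun θ : ℝ => (Complex.normSq (1 - c i * Complex.exp (θ*I)))⁻¹) := by
    intro i
    apply Continuous.inv₀
    · exact Complex.continuous_normSq.comp (by fun_prop)
    · intro θ
      exact (Complex.normSq_pos.mpr (exp_circle_ne (c i) (hcn i) θ)).ne'
  -- the norm bound on the integral
  have hpi : (0:ℝ) < π := Real.pi_pos
  have hnormIF : ‖∫ θ in (0:ℝ)..(2*π), F θ‖
      ≤ 4/((n:ℝ)*((n:ℝ)-1)) * ((n:ℝ) * (2*π/(1-r^2))) := by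
    have h2π : (0:ℝ) ≤ 2*π := by linarith
    calc ‖∫ θ in (0:ℝ)..(2*π), F θ‖ ≤ ∫ θ in (0:ℝ)..(2*π), ‖F θ‖ :=
          intervalIntegral.norm_integral_le_integral_norm h2π
      _ ≤ ∫ θ in (0:ℝ)..(2*π),
            (4/((n:ℝ)*((n:ℝ)-1)) * ∑ i, (Complex.normSq (1 - c i * Complex.exp (θ*I)))⁻¹) := by
          apply intervalIntegral.integral_mono_on h2π
          · exact (hcontF.norm).intervalIntegrable _ _
          · apply Continuous.intervalIntegrable
            exact continuous_const.mul (continuous_finset_sum _ fun i _ => hcont_g i)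
          · intro θ _
            have : ‖F θ‖ = ‖Φ θ‖ := by
              simp only [hFdef]
              rw [norm_mul, norm_exp_neg_mul, one_mul]
            rw [this]
            exact hb θ
      _ = 4/((n:ℝ)*((n:ℝ)-1)) * ∑ i, (2*π/(1 - Complex.normSq (c i))) := by
          rw [intervalIntegral.integral_const_mul,
            intervalIntegral.integral_finset_sum (fun i _ => (hcont_g i).intervalIntegrable _ _)]
          congr 1
          exact Finset.sum_congr rfl fun i _ => integral_poisson (c i) (hcn i)
      _ ≤ 4/((n:ℝ)*((n:ℝ)-1)) * ((n:ℝ) * (2*π/(1-r^2))) := by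
          apply mul_le_mul_of_nonneg_left _ (le_of_lt (div_pos (by norm_num)
            (mul_pos (by linarith : (0:ℝ) < (n:ℝ)) (by linarith : (0:ℝ) < (n:ℝ)-1))))
          have hr2 : 0 < 1 - r^2 := by nlinarith
          calc ∑ i, (2*π/(1 - Complex.normSq (c i)))
              ≤ ∑ _i : Fin n, (2*π/(1-r^2)) := by
                apply Finset.sum_le_sum
                intro i _
                apply div_le_div_of_nonneg_left h2π hr2
                have : Complex.normSq (c i) ≤ r^2 := by
                  rw [Complex.normSq_eq_norm_sq]
                  exact pow_le_pow_left₀ (norm_nonneg _) (hcr i) 2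
                linarith
            _ = (n:ℝ) * (2*π/(1-r^2)) := by
                rw [Finset.sum_const, Finset.card_univ, Fintype.card_fin, nsmul_eq_mul]
  -- put together
  have hrm : (1:ℝ)/3 ≤ r^m := by
    have h1 : (1 + 1/(m:ℝ)) ≤ Real.exp (1/(m:ℝ)) := by
      linarith [Real.add_one_le_exp (1/(m:ℝ))]
    have h2 : (1 + 1/(m:ℝ))^m ≤ Real.exp (1/(m:ℝ))^m :=
      pow_le_pow_left₀ (by positivity) h1 m
    have h3 : Real.exp (1/(m:ℝ))^m = Real.exp 1 := by
      rw [← Real.exp_nat_mul]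
      congr 1
      field_simp
    have h4 : (1 + 1/(m:ℝ))^m ≤ 3 := by
      rw [h3] at h2
      linarith [Real.exp_one_lt_d9]
    have h5 : r^m * (1 + 1/(m:ℝ))^m = 1 := by
      rw [← mul_pow, show r * (1+1/(m:ℝ)) = 1 from by
        rw [hrdef]; field_simp]
      exact one_pow m
    have hpow_pos : (0:ℝ) < (1+1/(m:ℝ))^m := by positivity
    have heq : r^m = 1 / ((1+1/(m:ℝ))^m) := by
      rw [eq_div_iff (ne_of_gt hpow_pos)]
      exact h5
    rw [heq]
    exact one_div_le_one_div_of_le hpow_pos h4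
  have hQbound : 1/(2*(m:ℝ)) ≤ 1 - r^2 := by
    have heq : 1 - r^2 = (2*(m:ℝ)+1)/(((m:ℝ)+1)^2) := by
      rw [hrdef]
      field_simp
      ring
    rw [heq, div_le_div_iff₀ (by positivity) (by positivity)]
    nlinarith
  have hrm0 : (0:ℝ) < r^m := by positivity
  have hr2 : (0:ℝ) < 1 - r^2 := by nlinarith
  have hDnorm : ‖D‖ ≤ 4/(r^m * ((n:ℝ)-1) * (1-r^2)) := by
    have hFD : ‖∫ θ in (0:ℝ)..(2*π), F θ‖ = 2*π*r^m*‖D‖ := by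
      rw [hIF, norm_mul, norm_mul, norm_pow, hrc]
      simp [Complex.norm_real, abs_of_pos hpi]
      try ring
    rw [hFD] at hnormIF
    have hnn : (0:ℝ) < (n:ℝ) := by linarith
    have hnn1 : (0:ℝ) < (n:ℝ) - 1 := by linarith
    rw [le_div_iff₀ (by positivity)]
    have h1 : 2*π*r^m*‖D‖ ≤ 4/((n:ℝ)*((n:ℝ)-1)) * ((n:ℝ) * (2*π/(1-r^2))) := hnormIF
    have h2 : 4/((n:ℝ)*((n:ℝ)-1)) * ((n:ℝ) * (2*π/(1-r^2)))
        = 8*π/(((n:ℝ)-1)*(1-r^2)) := by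
      field_simp
      ring
    rw [h2] at h1
    have hY : (0:ℝ) < ((n:ℝ)-1)*(1-r^2) := mul_pos hnn1 hr2
    have h3 : 8*π/(((n:ℝ)-1)*(1-r^2)) * (((n:ℝ)-1)*(1-r^2)) = 8*π :=
      div_mul_cancel₀ _ (ne_of_gt hY)
    have h4 := mul_le_mul_of_nonneg_right h1 (le_of_lt hY)
    rw [h3] at h4
    have hA : 2*π*(‖D‖ * (r^m * ((n:ℝ)-1) * (1-r^2))) ≤ 2*π*4 := by
      have e1 : 2*π*(‖D‖ * (r^m * ((n:ℝ)-1) * (1-r^2)))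
          = 2*π*r^m*‖D‖ * (((n:ℝ)-1)*(1-r^2)) := by ring
      rw [e1]
      linarith [h4]
    exact le_of_mul_le_mul_left hA (by positivity)
  calc ‖D‖ ≤ 4/(r^m * ((n:ℝ)-1) * (1-r^2)) := hDnorm
    _ ≤ 100*(m:ℝ)*Real.log ((m:ℝ)+1)/(n:ℝ) := by
        apply final_numeric (n:ℝ) (m:ℝ) (r^m) (1-r^2) _ hn2 hm1 hrm hQbound
        apply Real.log_le_log (by norm_num)
        linarith

end
end

section
/- There exists an absolute constant C > 0 such that for every integer n ≥ 2, every monic polynomial f over ℂ of degree n with all zeros ζ₁,…,ζₙ (counted with multiplicity) in the closed unit disk D̄(0,1), with λ₁,…,λ_{n−1} the zeros of f′ counted with multiplicity, every real R with 1 < R ≤ 3/2, and every p ∈ ℂ with |p| = R, one has | (1/n) ∑_{i=1}^{n} (R² − |ζᵢ|²)/|p − ζᵢ|² − (1/(n−1)) ∑_{j=1}^{n−1} (R² − |λⱼ|²)/|p − λⱼ|² | ≤ C · log(1/(R−1)) / (n (R−1)²). -/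
open Polynomial Complex Finset
open scoped BigOperators

lemma derivative_finset_prod {ι : Type*} [DecidableEq ι] (s : Finset ι) (f : ι → ℂ[X]) :
    derivative (∏ i ∈ s, f i) = ∑ i ∈ s, (∏ j ∈ s.erase i, f j) * derivative (f i) := by
  induction s using Finset.induction_on with
  | empty => simp
  | @insert a s ha ih =>
    have hsum : ∑ i ∈ s, (∏ j ∈ (insert a s).erase i, f j) * derivative (f i)
        = f a * ∑ i ∈ s, (∏ j ∈ s.erase i, f j) * derivative (f i) := by
      rw [Finset.mul_sum]
      apply Finset.sum_congr rfl
      intro i hi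
      have hia : i ≠ a := fun h => ha (h ▸ hi)
      rw [Finset.erase_insert_of_ne hia.symm,
        Finset.prod_insert (fun h => ha (Finset.mem_of_mem_erase h)), mul_assoc]
    rw [Finset.prod_insert ha, derivative_mul, ih, Finset.sum_insert ha,
      Finset.erase_insert ha, hsum]
    ring

lemma prod_erase_eq_s10 {ι : Type*} [Fintype ι] [DecidableEq ι] (g : ι → ℂ)
    (hg : ∀ i, g i ≠ 0) (i : ι) :
    ∏ j ∈ Finset.univ.erase i, g j = (∏ j, g j) * (g i)⁻¹ := by
  rw [← Finset.mul_prod_erase Finset.univ g (Finset.mem_univ i), mul_comm (g i),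
    mul_assoc, mul_inv_cancel₀ (hg i), mul_one]

lemma poisson_re {p w : ℂ} (h : p - w ≠ 0) :
    (‖p‖ ^ 2 - ‖w‖ ^ 2) / ‖p - w‖ ^ 2
      = 2 * (p * (p - w)⁻¹).re - 1 := by
  have hs : Complex.normSq (p - w) ≠ 0 := (Complex.normSq_pos.mpr h).ne'
  rw [show p * (p - w)⁻¹ = p / (p - w) from (div_eq_mul_inv p _).symm]
  rw [Complex.sq_norm, Complex.sq_norm, Complex.sq_norm, Complex.div_re]
  simp only [Complex.normSq_apply, Complex.sub_re, Complex.sub_im] at *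
  have hs' : (p.re - w.re) ^ 2 + (p.im - w.im) ^ 2 ≠ 0 := by rw [sq, sq]; exact hs
  field_simp
  ring

lemma re_term_ge {p w : ℂ} (h1 : ‖w‖ ≤ 1) (h2 : 1 < ‖p‖) :
    ‖p‖ * (‖p‖ - 1) * (‖p - w‖ ^ 2)⁻¹
      ≤ (p * (p - w)⁻¹).re := by
  have hne : p - w ≠ 0 := by
    intro h
    rw [sub_eq_zero] at h
    rw [h] at h2; linarith
  have hs : 0 < Complex.normSq (p - w) := Complex.normSq_pos.mpr hne
  have h3 : p.re * w.re + p.im * w.im ≤ ‖p‖ := by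
    have h4 := Complex.re_le_norm (p * (starRingEnd ℂ) w)
    rw [norm_mul, Complex.norm_conj] at h4
    simp only [Complex.mul_re, Complex.conj_re, Complex.conj_im] at h4
    nlinarith [norm_nonneg p]
  have h5 : ‖p‖ ^ 2 = p.re ^ 2 + p.im ^ 2 := by
    rw [Complex.sq_norm, Complex.normSq_apply]; ring
  rw [show p * (p - w)⁻¹ = p / (p - w) from (div_eq_mul_inv p _).symm]
  rw [Complex.div_re, Complex.sq_norm, ← add_div, ← div_eq_mul_inv,
    div_le_div_iff₀ hs hs]
  simp only [Complex.sub_re, Complex.sub_im]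
  nlinarith [hs]

lemma re_mul_natCast_inv (z : ℂ) (k : ℕ) : (z * ((k : ℂ))⁻¹).re = z.re / k := by
  rw [show ((k : ℂ))⁻¹ = (((k : ℝ)⁻¹ : ℝ) : ℂ) by
    rw [Complex.ofReal_inv, Complex.ofReal_natCast]]
  rw [mul_comm, Complex.re_ofReal_mul, div_eq_mul_inv]
  ring


lemma final_numeric_s10 (n : ℕ) (hn : 2 ≤ n) (R : ℝ) (hR1 : 1 < R) (hR2 : R ≤ 3 / 2) :
    4 * R / (((n - 1 : ℕ) : ℝ) * (R - 1))
      ≤ 100 * Real.log (1 / (R - 1)) / ((n : ℝ) * (R - 1) ^ 2) := by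
  have hs1 : (0 : ℝ) < R - 1 := by linarith
  have hs2 : R - 1 ≤ 1 / 2 := by linarith
  have hmadd : (n - 1) + 1 = n := by omega
  have hmn : ((n - 1 : ℕ) : ℝ) = (n : ℝ) - 1 := by rw [← hmadd]; push_cast; ring
  have h17 : (2 : ℝ) ≤ (n : ℝ) := by exact_mod_cast hn
  have hnRpos : (0 : ℝ) < (n : ℝ) := by linarith
  have hmRpos : (0 : ℝ) < ((n - 1 : ℕ) : ℝ) := by rw [hmn]; linarith
  have hnm2 : (n : ℝ) ≤ 2 * ((n - 1 : ℕ) : ℝ) := by rw [hmn]; linarith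
  have hlog : Real.log 2 ≤ Real.log (1 / (R - 1)) := by
    apply Real.log_le_log (by norm_num)
    rw [le_div_iff₀ hs1]
    linarith
  have hlog2 : (0.6931471803 : ℝ) < Real.log 2 := Real.log_two_gt_d9
  have hRpos : (0 : ℝ) < R := by linarith
  rw [div_le_div_iff₀ (mul_pos hmRpos hs1) (by positivity)]
  have e1 : 4 * R * ((n : ℝ) * (R - 1) ^ 2) ≤ 6 * ((n : ℝ) * (R - 1) ^ 2) := by
    have h0 : (0 : ℝ) ≤ (n : ℝ) * (R - 1) ^ 2 := by positivity
    nlinarith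
  have e2 : 6 * ((n : ℝ) * (R - 1) ^ 2) ≤ 12 * (((n - 1 : ℕ) : ℝ) * (R - 1) ^ 2) := by
    nlinarith [sq_nonneg (R - 1)]
  have e3 : 12 * (((n - 1 : ℕ) : ℝ) * (R - 1) ^ 2) ≤ 6 * (((n - 1 : ℕ) : ℝ) * (R - 1)) := by
    nlinarith [mul_pos hmRpos hs1]
  have e4 : 6 * (((n - 1 : ℕ) : ℝ) * (R - 1))
      ≤ 100 * Real.log (1 / (R - 1)) * (((n - 1 : ℕ) : ℝ) * (R - 1)) := by
    have h18 : (6 : ℝ) ≤ 100 * Real.log (1 / (R - 1)) := by nlinarith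
    nlinarith [mul_pos hmRpos hs1]
  linarith

/-- Balayage estimate (2.10): there is an absolute constant `C > 0` such that for any
monic `f = ∏ (X - ζᵢ)` of degree `n ≥ 2` with all zeros in the closed unit disk and
`f' = n ∏ (X - λⱼ)`, any real `1 < R ≤ 3/2` and any `p` with `|p| = R`, the balayages
of the zeros of `f` and of `f'` onto the circle of radius `R` differ at `p` by at most
`C log(1/(R-1)) / (n (R-1)²)`. -/
theorem balayage_estimate : ∃ C : ℝ, 0 < C ∧
    ∀ n : ℕ, 2 ≤ n → ∀ (ζ : Fin n → ℂ) (lam : Fin (n - 1) → ℂ) (f : Polynomial ℂ),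
      f = ∏ i, (Polynomial.X - Polynomial.C (ζ i)) →
      (∀ i, ‖ζ i‖ ≤ 1) →
      Polynomial.derivative f =
        Polynomial.C (n : ℂ) * ∏ j, (Polynomial.X - Polynomial.C (lam j)) →
      ∀ R : ℝ, 1 < R → R ≤ 3 / 2 → ∀ p : ℂ, ‖p‖ = R →
        |(1 / (n : ℝ)) * ∑ i, (R ^ 2 - ‖ζ i‖ ^ 2) / ‖p - ζ i‖ ^ 2
          - (1 / ((n : ℝ) - 1)) * ∑ j, (R ^ 2 - ‖lam j‖ ^ 2) / ‖p - lam j‖ ^ 2|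
        ≤ C * Real.log (1 / (R - 1)) / (n * (R - 1) ^ 2) := by
  refine ⟨100, by norm_num, ?_⟩
  intro n hn ζ lam f hf hζ hdf R hR1 hR2 p hp
  haveI : NeZero n := ⟨by omega⟩
  have hm1 : 1 ≤ n - 1 := by omega
  have hmadd : (n - 1) + 1 = n := by omega
  have hmn : ((n - 1 : ℕ) : ℝ) = (n : ℝ) - 1 := by
    rw [← hmadd]; push_cast; ring
  have hmc : ((n - 1 : ℕ) : ℂ) = (n : ℂ) - 1 := by
    rw [← hmadd]; push_cast; ring
  have hnne : (n : ℂ) ≠ 0 := Nat.cast_ne_zero.mpr (by omega)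
  have hmne : ((n - 1 : ℕ) : ℂ) ≠ 0 := Nat.cast_ne_zero.mpr (by omega)
  have hnRpos : (0 : ℝ) < n := by positivity
  have hmRpos : (0 : ℝ) < ((n - 1 : ℕ) : ℝ) := by
    have : (0:ℕ) < n - 1 := by omega
    exact_mod_cast this
  have hRpos : (0 : ℝ) < R := by linarith
  have hs1 : (0 : ℝ) < R - 1 := by linarith
  have hpabs : 1 < ‖p‖ := by rw [hp]; exact hR1
  have hζne : ∀ i, p - ζ i ≠ 0 := by
    intro i h
    rw [sub_eq_zero] at h
    have h2 := hζ i
    rw [← h, hp] at h2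
    linarith
  set Pf : ℂ := ∏ i, (p - ζ i) with hPf
  have hPfne : Pf ≠ 0 := Finset.prod_ne_zero_iff.mpr fun i _ => hζne i
  set A : ℂ := ∑ i, (p - ζ i)⁻¹ with hA
  set B : ℂ := ∑ i, ((p - ζ i)⁻¹) ^ 2 with hB
  set T : ℝ := ∑ i, (‖p - ζ i‖ ^ 2)⁻¹ with hT
  -- first derivative form
  have hf' : derivative f = ∑ i, ∏ j ∈ Finset.univ.erase i, (X - C (ζ j)) := by
    rw [hf, derivative_finset_prod]
    simp [Polynomial.derivative_X_sub_C]
  have heval_erase : ∀ i : Fin n,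
      ∏ j ∈ Finset.univ.erase i, (p - ζ j) = Pf * (p - ζ i)⁻¹ :=
    fun i => prod_erase_eq_s10 _ hζne i
  have hevalf' : eval p (derivative f) = Pf * A := by
    rw [hf', eval_finset_sum]
    simp only [eval_prod, eval_sub, eval_X, eval_C]
    rw [hA, Finset.mul_sum]
    exact Finset.sum_congr rfl fun i _ => heval_erase i
  set Pl : ℂ := ∏ j, (p - lam j) with hPl
  have hevalf'2 : eval p (derivative f) = (n : ℂ) * Pl := by
    rw [hdf, eval_mul, eval_C, eval_prod, hPl]
    simp only [eval_sub, eval_X, eval_C]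
  have hkey1 : (n : ℂ) * Pl = Pf * A := by rw [← hevalf'2, hevalf']
  -- lower bound on (p*A).re
  have hre_low : R * (R - 1) * T ≤ (p * A).re := by
    have hre : (p * A).re = ∑ i, (p * (p - ζ i)⁻¹).re := by
      rw [hA, Finset.mul_sum, Complex.re_sum]
    rw [hre, hT, Finset.mul_sum]
    apply Finset.sum_le_sum
    intro i _
    have h6 := re_term_ge (hζ i) hpabs
    rw [hp] at h6
    exact h6
  have hTpos : 0 < T := by
    rw [hT]
    apply Finset.sum_pos
    · intro i _
      have : ‖p - ζ i‖ ≠ 0 := norm_ne_zero_iff.mpr (hζne i)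
      positivity
    · exact ⟨⟨0, by omega⟩, Finset.mem_univ _⟩
  have hreApos : 0 < (p * A).re := lt_of_lt_of_le (mul_pos (mul_pos hRpos hs1) hTpos) hre_low
  have hAabs : (R - 1) * T ≤ ‖A‖ := by
    have h6 : (p * A).re ≤ ‖p * A‖ := Complex.re_le_norm _
    rw [norm_mul, hp] at h6
    have h7 := le_trans hre_low h6
    nlinarith [norm_nonneg A]
  have hAne : A ≠ 0 := by
    intro h
    rw [h, mul_zero] at hreApos
    simp at hreApos
  have hPlne : Pl ≠ 0 := by
    intro h
    rw [h, mul_zero] at hkey1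
    exact mul_ne_zero hPfne hAne hkey1.symm
  have hlamne : ∀ j, p - lam j ≠ 0 := by
    intro j h
    exact hPlne (Finset.prod_eq_zero (Finset.mem_univ j) h)
  set L : ℂ := ∑ j, (p - lam j)⁻¹ with hL
  -- second derivative, lambda side
  have hd2l : eval p (derivative (derivative f)) = (n : ℂ) * Pl * L := by
    rw [hdf, derivative_mul, derivative_C, zero_mul, zero_add, derivative_finset_prod]
    simp only [Polynomial.derivative_X_sub_C, mul_one, eval_mul, eval_C, eval_finset_sum,
      eval_prod, eval_sub, eval_X]
    have h8 : ∀ j ∈ Finset.univ, ∏ k ∈ Finset.univ.erase j, (p - lam k)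
        = Pl * (p - lam j)⁻¹ := fun j _ => prod_erase_eq_s10 _ hlamne j
    rw [Finset.sum_congr rfl h8, ← Finset.mul_sum, ← hL]
    ring
  -- second derivative, zeta side
  have hinner : ∀ i : Fin n,
      ∑ j ∈ Finset.univ.erase i, ∏ k ∈ (Finset.univ.erase i).erase j, (p - ζ k)
        = Pf * (p - ζ i)⁻¹ * (A - (p - ζ i)⁻¹) := by
    intro i
    have h7 : ∀ j ∈ Finset.univ.erase i, ∏ k ∈ (Finset.univ.erase i).erase j, (p - ζ k)
        = Pf * (p - ζ i)⁻¹ * (p - ζ j)⁻¹ := by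
      intro j hj
      have h8 := Finset.mul_prod_erase (Finset.univ.erase i) (fun k => p - ζ k) hj
      rw [heval_erase i] at h8
      have h9 : ∏ k ∈ (Finset.univ.erase i).erase j, (p - ζ k)
          = (p - ζ j)⁻¹ * ((p - ζ j) * ∏ k ∈ (Finset.univ.erase i).erase j, (p - ζ k)) := by
        rw [inv_mul_cancel_left₀ (hζne j)]
      rw [h9, h8]
      ring
    rw [Finset.sum_congr rfl h7, ← Finset.mul_sum]
    congr 1
    rw [hA, eq_sub_iff_add_eq, Finset.sum_erase_add _ _ (Finset.mem_univ i)]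
  have hd2z : eval p (derivative (derivative f)) = Pf * (A ^ 2 - B) := by
    rw [hf', derivative_sum, eval_finset_sum]
    have h9 : ∀ i ∈ Finset.univ,
        eval p (derivative (∏ j ∈ Finset.univ.erase i, (X - C (ζ j))))
          = Pf * (p - ζ i)⁻¹ * (A - (p - ζ i)⁻¹) := by
      intro i _
      rw [derivative_finset_prod]
      simp only [Polynomial.derivative_X_sub_C, mul_one, eval_finset_sum, eval_prod,
        eval_sub, eval_X, eval_C]
      exact hinner i
    rw [Finset.sum_congr rfl h9]
    have h10 : ∑ i, Pf * (p - ζ i)⁻¹ * (A - (p - ζ i)⁻¹) = Pf * (A ^ 2 - B) := by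
      calc ∑ i, Pf * (p - ζ i)⁻¹ * (A - (p - ζ i)⁻¹)
          = ∑ i, (Pf * ((p - ζ i)⁻¹ * A) - Pf * ((p - ζ i)⁻¹) ^ 2) :=
            Finset.sum_congr rfl fun i _ => by ring
        _ = Pf * ((∑ i, (p - ζ i)⁻¹) * A) - Pf * ∑ i, ((p - ζ i)⁻¹) ^ 2 := by
            rw [Finset.sum_sub_distrib, ← Finset.mul_sum, ← Finset.mul_sum, ← Finset.sum_mul]
        _ = Pf * (A ^ 2 - B) := by rw [← hA, ← hB]; ring
    rw [h10]
  -- the key algebraic relation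
  have hkey2 : (n : ℂ) * Pl * L = Pf * (A ^ 2 - B) := by rw [← hd2l, hd2z]
  have hALB : A * L = A ^ 2 - B := by
    have h11 : Pf * (A * L) = Pf * (A ^ 2 - B) := by
      rw [← mul_assoc, ← hkey1, hkey2]
    exact mul_left_cancel₀ hPfne h11
  have hLval : L = (A ^ 2 - B) / A := by
    rw [eq_div_iff hAne]
    linear_combination hALB
  -- Poisson sum identities
  have hS1 : ∑ i, (R ^ 2 - ‖ζ i‖ ^ 2) / ‖p - ζ i‖ ^ 2
      = 2 * (p * A).re - n := by
    have h12 : ∀ i ∈ Finset.univ,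
        (R ^ 2 - ‖ζ i‖ ^ 2) / ‖p - ζ i‖ ^ 2
          = 2 * (p * (p - ζ i)⁻¹).re - 1 := by
      intro i _
      rw [← hp]
      exact poisson_re (hζne i)
    rw [Finset.sum_congr rfl h12, Finset.sum_sub_distrib, ← Finset.mul_sum,
      ← Complex.re_sum, ← Finset.mul_sum, ← hA]
    simp
  have hS2 : ∑ j, (R ^ 2 - ‖lam j‖ ^ 2) / ‖p - lam j‖ ^ 2
      = 2 * (p * L).re - ((n-1 : ℕ) : ℝ) := by
    have h12 : ∀ j ∈ Finset.univ,
        (R ^ 2 - ‖lam j‖ ^ 2) / ‖p - lam j‖ ^ 2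
          = 2 * (p * (p - lam j)⁻¹).re - 1 := by
      intro j _
      rw [← hp]
      exact poisson_re (hlamne j)
    rw [Finset.sum_congr rfl h12, Finset.sum_sub_distrib, ← Finset.mul_sum,
      ← Complex.re_sum, ← Finset.mul_sum, ← hL]
    simp
  -- the complex number W
  set W : ℂ := p * ((n : ℂ) * B - A ^ 2) / ((n : ℂ) * ((n - 1 : ℕ) : ℂ) * A) with hW
  have hWeq : p * A * ((n : ℂ))⁻¹ - p * L * (((n - 1 : ℕ) : ℂ))⁻¹ = W := by
    rw [hW, hLval, hmc]
    have hn1 : (n : ℂ) - 1 ≠ 0 := by rw [← hmc]; exact hmne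
    field_simp
    ring
  have hgoal_eq : (1 / (n : ℝ)) * (2 * (p * A).re - n)
      - (1 / ((n : ℝ) - 1)) * (2 * (p * L).re - ((n - 1 : ℕ) : ℝ)) = 2 * W.re := by
    have hnr : ((n : ℝ)) ≠ 0 := ne_of_gt hnRpos
    have hmr : ((n : ℝ)) - 1 ≠ 0 := by rw [← hmn]; exact ne_of_gt hmRpos
    rw [← hWeq, Complex.sub_re, re_mul_natCast_inv, re_mul_natCast_inv, ← hmn]
    generalize (p * A).re = a
    generalize (p * L).re = b
    field_simp
    ring
  -- bounds
  have habsB : ‖B‖ ≤ T := by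
    rw [hB, hT]
    refine le_trans (norm_sum_le _ _) (le_of_eq (Finset.sum_congr rfl fun i _ => ?_))
    rw [norm_pow, norm_inv, inv_pow]
  have habsA2 : ‖A‖ ^ 2 ≤ (n : ℝ) * T := by
    have h13 : ‖A‖ ≤ ∑ i, ‖(p - ζ i)⁻¹‖ := by
      rw [hA]; exact norm_sum_le _ _
    have h14 : (∑ i, ‖(p - ζ i)⁻¹‖) ^ 2
        ≤ (Finset.univ.card : ℝ) * ∑ i, ‖(p - ζ i)⁻¹‖ ^ 2 :=
      sq_sum_le_card_mul_sum_sq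
    have h15 : ∑ i, ‖(p - ζ i)⁻¹‖ ^ 2 = T := by
      rw [hT]
      exact Finset.sum_congr rfl fun i _ => by rw [norm_inv, inv_pow]
    have h16 : (0 : ℝ) ≤ ∑ i, ‖(p - ζ i)⁻¹‖ :=
      Finset.sum_nonneg fun i _ => norm_nonneg _
    calc ‖A‖ ^ 2 ≤ (∑ i, ‖(p - ζ i)⁻¹‖) ^ 2 := by
          apply pow_le_pow_left₀ (norm_nonneg _) h13
      _ ≤ (Finset.univ.card : ℝ) * T := by rw [← h15]; exact h14
      _ = (n : ℝ) * T := by simp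
  have hnum : ‖(n : ℂ) * B - A ^ 2‖ ≤ 2 * (n : ℝ) * T := by
    calc ‖(n : ℂ) * B - A ^ 2‖
        ≤ (n : ℝ) * ‖B‖ + ‖A ^ 2‖ := by
          have hstep := norm_add_le ((n : ℂ) * B) (-(A ^ 2))
          rw [← sub_eq_add_neg, norm_neg, norm_mul, Complex.norm_natCast] at hstep
          exact hstep
      _ = (n : ℝ) * ‖B‖ + ‖A‖ ^ 2 := by rw [norm_pow]
      _ ≤ (n : ℝ) * T + (n : ℝ) * T := by
          have := mul_le_mul_of_nonneg_left habsB (le_of_lt hnRpos)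
          linarith [habsA2]
      _ = 2 * (n : ℝ) * T := by ring
  have habsW : ‖W‖ ≤ 2 * R / (((n - 1 : ℕ) : ℝ) * (R - 1)) := by
    have hWval : ‖W‖
        = R * ‖(n : ℂ) * B - A ^ 2‖ / ((n : ℝ) * ((n - 1 : ℕ) : ℝ) * ‖A‖) := by
      rw [hW, norm_div, norm_mul, norm_mul, norm_mul, hp, Complex.norm_natCast,
        Complex.norm_natCast]
    rw [hWval]
    have hden_pos : (0 : ℝ) < (n : ℝ) * ((n - 1 : ℕ) : ℝ) * ((R - 1) * T) :=
      mul_pos (mul_pos hnRpos hmRpos) (mul_pos hs1 hTpos)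
    have hden_le : (n : ℝ) * ((n - 1 : ℕ) : ℝ) * ((R - 1) * T)
        ≤ (n : ℝ) * ((n - 1 : ℕ) : ℝ) * ‖A‖ := by
      exact mul_le_mul_of_nonneg_left hAabs (le_of_lt (mul_pos hnRpos hmRpos))
    calc R * ‖(n : ℂ) * B - A ^ 2‖ / ((n : ℝ) * ((n - 1 : ℕ) : ℝ) * ‖A‖)
        ≤ R * (2 * (n : ℝ) * T) / ((n : ℝ) * ((n - 1 : ℕ) : ℝ) * ((R - 1) * T)) := by
          apply div_le_div₀
            (le_of_lt (mul_pos hRpos (mul_pos (mul_pos two_pos hnRpos) hTpos))) ?_ hden_pos hden_le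
          exact mul_le_mul_of_nonneg_left hnum (le_of_lt hRpos)
      _ = 2 * R / (((n - 1 : ℕ) : ℝ) * (R - 1)) := by
          rw [div_eq_div_iff hden_pos.ne' (mul_pos hmRpos hs1).ne']
          ring
  -- putting it together
  rw [hS1, hS2, hgoal_eq]
  have hXbound : |2 * W.re| ≤ 4 * R / (((n - 1 : ℕ) : ℝ) * (R - 1)) := by
    rw [abs_mul, _root_.abs_two]
    calc 2 * |W.re| ≤ 2 * ‖W‖ := by
          linarith [Complex.abs_re_le_norm W]
      _ ≤ 2 * (2 * R / (((n - 1 : ℕ) : ℝ) * (R - 1))) := by linarith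
      _ = 4 * R / (((n - 1 : ℕ) : ℝ) * (R - 1)) := by ring
  exact le_trans hXbound (final_numeric_s10 n hn R hR1 hR2)
end

section
/- Let z ∈ ℂ satisfy |z| ≤ 1 and |z − 1| = 1. Then Re(z²) ≤ −(1/2)|z|². -/
open Complex

/-- Key geometric observation (Figure 2): if `|z| ≤ 1` and `|z - 1| = 1`, then
`Re(z²) ≤ -|z|²/2`. -/
theorem re_sq_on_arc (z : ℂ) (h1 : ‖z‖ ≤ 1) (h2 : ‖z - 1‖ = 1) :
    (z ^ 2).re ≤ -(1 / 2) * ‖z‖ ^ 2 := by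
  have h1' : ‖z‖ ^ 2 ≤ 1 := by nlinarith [norm_nonneg z]
  have h2' : ‖z - 1‖ ^ 2 = 1 := by rw [h2]; norm_num
  rw [Complex.sq_norm, Complex.normSq_apply] at h1' h2' ⊢
  simp only [Complex.sub_re, Complex.sub_im, Complex.one_re, Complex.one_im,
    Complex.mul_re, Complex.mul_im, pow_two] at h1' h2' ⊢
  nlinarith [sq_nonneg z.re, sq_nonneg z.im, sq_nonneg (z.re - 1/2)]
end

section
/- There exists an absolute constant C > 0 such that for every real a ∈ [0,1] and every ξ ∈ ℂ with |ξ| ≤ 1 and |a − ξ| ≥ 1, one has Re(ξ²) ≤ −(1/4)|ξ|² + C·( (1−a)² + (log|a − ξ|)² ). -/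
open Complex

private lemma case_pos (a x r : ℝ) (ha1 : a ≤ 1) (hx0 : 0 ≤ x) (hx1 : x ≤ 1)
    (hr1 : 1 ≤ r) (hc : 2*a*x + r^2 ≤ 1 + a^2) :
    2*x^2 - (3/2)*a*x + (3/4)*(a^2 - r^2) ≤ 10*(1-a)^2 + (5/2)*(r-1)^2 := by
  nlinarith [mul_nonneg hx0 (sub_nonneg.2 hx1), mul_nonneg (sub_nonneg.2 hr1) (sub_nonneg.2 ha1),
    mul_nonneg hx0 (sub_nonneg.2 ha1), mul_nonneg hx0 (sub_nonneg.2 hr1), sq_nonneg (r-1),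
    sq_nonneg (1-a), sq_nonneg (x - (1-a)), sq_nonneg (x - (r-1))]

private lemma case_neg (a x r : ℝ) (ha0 : 0 ≤ a) (ha1 : a ≤ 1) (hx0 : x ≤ 0)
    (hr1 : 1 ≤ r) (hxr : a - r ≤ x) :
    2*x^2 - (3/2)*a*x + (3/4)*(a^2 - r^2) ≤ 10*(1-a)^2 + (5/2)*(r-1)^2 := by
  nlinarith [mul_nonneg (sub_nonneg.2 hxr) (neg_nonneg.2 hx0), sq_nonneg (r-1), sq_nonneg (1-a),
    sq_nonneg ((r-1)-(1-a)), mul_nonneg (sub_nonneg.2 hr1) ha0]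

private lemma key (a x y r : ℝ) (ha0 : 0 ≤ a) (ha1 : a ≤ 1) (hxy : x^2 + y^2 ≤ 1)
    (hrsq : r^2 = (a-x)^2 + y^2) (hr1 : 1 ≤ r) :
    x^2 - y^2 ≤ -(1/4)*(x^2+y^2) + 10*((1-a)^2 + ((r-1)/2)^2) := by
  have hy2 : 0 ≤ y^2 := sq_nonneg y
  rcases le_total x 0 with h | h
  · have hxr : a - r ≤ x := by nlinarith [sq_nonneg y]
    nlinarith [case_neg a x r ha0 ha1 h hr1 hxr]
  · have hx1 : x ≤ 1 := by nlinarith [sq_nonneg (x-1)]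
    have hc : 2*a*x + r^2 ≤ 1 + a^2 := by nlinarith
    nlinarith [case_pos a x r ha1 h hx1 hr1 hc]

/-- Quantitative form of the geometric estimate from the end of Section 5: there is an
absolute constant `C > 0` such that for `a ∈ [0,1]` and `ξ` in the closed unit disk
with `|a - ξ| ≥ 1`, one has `Re(ξ²) ≤ -|ξ|²/4 + C((1-a)² + (log|a-ξ|)²)`. -/
theorem re_sq_near_arc : ∃ C : ℝ, 0 < C ∧
    ∀ a : ℝ, 0 ≤ a → a ≤ 1 → ∀ ξ : ℂ, ‖ξ‖ ≤ 1 →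
      1 ≤ ‖(a : ℂ) - ξ‖ →
      (ξ ^ 2).re ≤ -(1 / 4) * ‖ξ‖ ^ 2
        + C * ((1 - a) ^ 2 + Real.log ‖(a : ℂ) - ξ‖ ^ 2) := by
  refine ⟨10, by norm_num, ?_⟩
  intro a ha0 ha1 ξ hξ hr1
  set x := ξ.re with hxdef
  set y := ξ.im with hydef
  set r := ‖(a : ℂ) - ξ‖ with hrdef
  have hre : (ξ ^ 2).re = x^2 - y^2 := by rw [pow_two, Complex.mul_re]; ring
  have habs : ‖ξ‖ ^ 2 = x^2 + y^2 := by
    rw [Complex.sq_norm, Complex.normSq_apply]; ring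
  have hrsq : r^2 = (a - x)^2 + y^2 := by
    rw [hrdef, Complex.sq_norm, Complex.normSq_apply]
    simp [Complex.sub_re, Complex.sub_im]
    ring
  have hxy : x^2 + y^2 ≤ 1 := by
    rw [← habs]
    nlinarith [norm_nonneg ξ]
  have hr0 : (0:ℝ) < r := lt_of_lt_of_le one_pos hr1
  have hr2 : r ≤ 2 := by
    have h := norm_sub_le ((a:ℂ)) ξ
    simp only [Complex.norm_real, Real.norm_eq_abs] at h
    rw [_root_.abs_of_nonneg ha0] at h
    rw [hrdef]
    linarith
  -- log lower bound
  have hloglb : (r - 1)/2 ≤ Real.log r := by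
    have hinv : Real.log (1/r) ≤ 1/r - 1 := Real.log_le_sub_one_of_pos (by positivity)
    rw [one_div, Real.log_inv] at hinv
    have hrr : r * r⁻¹ = 1 := mul_inv_cancel₀ (ne_of_gt hr0)
    have h2 : (r-1)/2 ≤ 1 - r⁻¹ := by
      have h1t : 0 ≤ r⁻¹ := by positivity
      nlinarith [mul_nonneg (sub_nonneg.2 hr1) (sub_nonneg.2 hr2)]
    linarith
  have hlog0 : 0 ≤ (r - 1)/2 := by linarith
  have hlog2 : ((r-1)/2)^2 ≤ Real.log r ^ 2 := by
    exact pow_le_pow_left₀ hlog0 hloglb 2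
  have hmain := key a x y r ha0 ha1 hxy hrsq hr1
  rw [hre, habs]
  linarith
end
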